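/- Let k ≥ 1, let ρ₁,…,ρ_{2k} ∈ ℝ, and let D(X) = ∏_{i=1}^{2k}(X − ρᵢ) ∈ ℝ[X]. Then there exists a real number t with t > max{2, |ρ₁|, …, |ρ_{2k}|} and sums of squares s₁, s₂ ∈ ℝ[X] of degree at most 2k such that t − X = s₁ − D(X) and t + X = s₂ − D(X). -/

import Mathlib

open Polynomial Filter

/-- A real polynomial nonnegative on all of ℝ is a sum of two squares. -/
lemma nonneg_sum_two_sq (p : Polynomial ℝ) (hp : ∀ x, 0 ≤ p.eval x) :
    ∃ a b : Polynomial ℝ, p = a ^ 2 + b ^ 2 := by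
  suffices H : ∀ n : ℕ, ∀ p : Polynomial ℝ, (∀ x, 0 ≤ p.eval x) → p.natDegree = n →
      ∃ a b : Polynomial ℝ, p = a ^ 2 + b ^ 2 from H p.natDegree p hp rfl
  clear hp p
  intro n
  induction n using Nat.strong_induction_on with
  | _ n ih =>
  intro p hp hn
  rcases eq_or_ne p 0 with rfl | hp0
  · exact ⟨0, 0, by ring⟩
  rcases Nat.eq_zero_or_pos n with rfl | hn1
  · have hpc : p = C (p.coeff 0) := Polynomial.eq_C_of_natDegree_eq_zero hn
    have h0 : 0 ≤ p.coeff 0 := by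
      rw [Polynomial.coeff_zero_eq_eval_zero]; exact hp 0
    refine ⟨C (Real.sqrt (p.coeff 0)), 0, ?_⟩
    rw [← C_pow, sq, Real.mul_self_sqrt h0, ← hpc]
    ring
  · have hdeg0 : p.degree ≠ 0 := by
      intro h
      have : p.natDegree = 0 := natDegree_eq_zero_iff_degree_le_zero.mpr h.le
      omega
    obtain ⟨z, hz⟩ : ∃ z : ℂ, Polynomial.aeval z p = 0 :=
      IsAlgClosed.exists_aeval_eq_zero ℂ p hdeg0
    rcases eq_or_ne z.im 0 with him | him
    · -- real root case
      have hzz : z = (z.re : ℂ) := Complex.ext rfl (by simp [him])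
      have hr : p.eval z.re = 0 := by
        have h2 := hz
        rw [hzz, Polynomial.aeval_def, show ((z.re : ℂ)) = algebraMap ℝ ℂ z.re from rfl,
          Polynomial.eval₂_at_apply, Complex.coe_algebraMap] at h2
        exact_mod_cast h2
      have hmin : IsLocalMin (fun x => p.eval x) z.re :=
        Filter.Eventually.of_forall (fun x => by simpa [hr] using hp x)
      have hr' : (derivative p).eval z.re = 0 := by
        rw [← Polynomial.deriv]; exact hmin.deriv_eq_zero
      have hmult : 1 < rootMultiplicity z.re p :=
        (Polynomial.one_lt_rootMultiplicity_iff_isRoot hp0).mpr ⟨hr, hr'⟩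
      have hdvd : (X - C z.re) ^ 2 ∣ p :=
        dvd_trans (pow_dvd_pow _ hmult) (Polynomial.pow_rootMultiplicity_dvd p z.re)
      obtain ⟨q, hq⟩ := hdvd
      have hq0 : q ≠ 0 := by rintro rfl; simp at hq; exact hp0 hq
      have hqnn : ∀ x, 0 ≤ q.eval x := by
        have hoff : ∀ x ∈ ({z.re}ᶜ : Set ℝ), 0 ≤ q.eval x := by
          intro x hx
          have hx' : x ≠ z.re := hx
          have hpx := hp x
          rw [hq, Polynomial.eval_mul, Polynomial.eval_pow, Polynomial.eval_sub,
            Polynomial.eval_X, Polynomial.eval_C] at hpx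
          have hpos : 0 < (x - z.re) ^ 2 := pow_two_pos_of_ne_zero (sub_ne_zero.mpr hx')
          nlinarith [hpx, hpos]
        have hcl : IsClosed {x : ℝ | 0 ≤ q.eval x} :=
          isClosed_le continuous_const q.continuous
        intro x
        have hsub : closure ({z.re}ᶜ : Set ℝ) ⊆ {x : ℝ | 0 ≤ q.eval x} :=
          hcl.closure_subset_iff.mpr hoff
        have := (dense_compl_singleton z.re).closure_eq
        exact hsub (by rw [this]; trivial)
      have hdegq : q.natDegree < n ∧ q.natDegree = q.natDegree := by
        constructor
        · have hmono : ((X - C z.re) ^ 2).Monic := (monic_X_sub_C z.re).pow 2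
          have : p.natDegree = 2 + q.natDegree := by
            rw [hq, Polynomial.natDegree_mul (pow_ne_zero _ (X_sub_C_ne_zero z.re)) hq0,
              Polynomial.natDegree_pow, Polynomial.natDegree_X_sub_C]
          omega
        · rfl
      obtain ⟨a, b, hab⟩ := ih q.natDegree hdegq.1 q hqnn rfl
      refine ⟨(X - C z.re) * a, (X - C z.re) * b, ?_⟩
      rw [hq, hab]; ring
    · -- complex root case
      have hdvd := Polynomial.quadratic_dvd_of_aeval_eq_zero_im_ne_zero p hz him
      have hnorm : (‖z‖ : ℝ) ^ 2 = z.re ^ 2 + z.im ^ 2 := by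
        rw [← Complex.normSq_eq_norm_sq, Complex.normSq_apply]; ring
      have hdform : (X : Polynomial ℝ) ^ 2 - C (2 * z.re) * X + C (‖z‖ ^ 2)
          = (X - C z.re) ^ 2 + (C z.im) ^ 2 := by
        rw [hnorm]
        simp only [map_add, map_mul, map_pow, map_ofNat, C_add, C_mul, C_pow]
        ring
      rw [hdform] at hdvd
      obtain ⟨q, hq⟩ := hdvd
      have hq0 : q ≠ 0 := by rintro rfl; simp at hq; exact hp0 hq
      have hdpos : ∀ x : ℝ, 0 < ((X - C z.re) ^ 2 + (C z.im) ^ 2).eval x := by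
        intro x
        simp only [Polynomial.eval_add, Polynomial.eval_pow, Polynomial.eval_sub,
          Polynomial.eval_X, Polynomial.eval_C]
        positivity
      have hqnn : ∀ x, 0 ≤ q.eval x := by
        intro x
        have hpx := hp x
        rw [hq, Polynomial.eval_mul] at hpx
        nlinarith [hpx, hdpos x]
      have hCdeglt : ((C z.im) ^ 2 : Polynomial ℝ).degree < ((X - C z.re) ^ 2).degree := by
        have h2 : ((X - C z.re) ^ 2 : Polynomial ℝ).degree = 2 := by
          rw [degree_pow, degree_X_sub_C]; rfl
        have h1 : ((C z.im) ^ 2 : Polynomial ℝ).degree ≤ 0 := by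
          rw [← C_pow]; exact degree_C_le
        exact lt_of_le_of_lt h1 (by rw [h2]; norm_num)
      have hdmonic : ((X - C z.re) ^ 2 + (C z.im) ^ 2).Monic :=
        Monic.add_of_left ((monic_X_sub_C z.re).pow 2) hCdeglt
      have hddeg : ((X - C z.re) ^ 2 + (C z.im) ^ 2).natDegree = 2 := by
        have h2 : ((X - C z.re) ^ 2 + (C z.im) ^ 2).degree = 2 := by
          rw [degree_add_eq_left_of_degree_lt hCdeglt, degree_pow, degree_X_sub_C]; rfl
        exact natDegree_eq_of_degree_eq_some h2
      have hdlt : q.natDegree < n := by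
        have : p.natDegree = 2 + q.natDegree := by
          rw [hq, Polynomial.natDegree_mul hdmonic.ne_zero hq0, hddeg]
        omega
      obtain ⟨a, b, hab⟩ := ih q.natDegree hdlt q hqnn rfl
      refine ⟨(X - C z.re) * a - C z.im * b, (X - C z.re) * b + C z.im * a, ?_⟩
      rw [hq, hab]; ring

/-- A univariate polynomial is a sum of squares. -/
def IsSOSUni (p : Polynomial ℝ) : Prop :=
  ∃ (t : ℕ) (s : Fin t → Polynomial ℝ), p = ∑ i, (s i) ^ 2

theorem statement9 (k : ℕ) (hk : 1 ≤ k) (ρ : Fin (2 * k) → ℝ) :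
    ∃ t : ℝ, max 2 (⨆ i, |ρ i|) < t ∧
      ∃ s₁ s₂ : Polynomial ℝ, IsSOSUni s₁ ∧ IsSOSUni s₂ ∧
        s₁.natDegree ≤ 2 * k ∧ s₂.natDegree ≤ 2 * k ∧
        Polynomial.C t - Polynomial.X =
          s₁ - ∏ i, (Polynomial.X - Polynomial.C (ρ i)) ∧
        Polynomial.C t + Polynomial.X =
          s₂ - ∏ i, (Polynomial.X - Polynomial.C (ρ i)) := by
  set D : Polynomial ℝ := ∏ i, (Polynomial.X - Polynomial.C (ρ i)) with hD
  have hDmonic : D.Monic := monic_prod_of_monic _ _ (fun i _ => monic_X_sub_C _)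
  have hDdeg : D.natDegree = 2 * k := by
    rw [hD, Polynomial.natDegree_prod_of_monic _ _ (fun i _ => monic_X_sub_C _)]
    simp [Polynomial.natDegree_X_sub_C]
  have hDdeg' : D.degree = (2 * k : ℕ) := by
    rw [Polynomial.degree_eq_natDegree hDmonic.ne_zero, hDdeg]
  have hXlt : (X : Polynomial ℝ).degree < D.degree := by
    rw [hDdeg', degree_X]
    exact_mod_cast (by omega : 1 < 2 * k)
  -- D - X and D + X are monic with positive degree
  have hm1 : (D - X).Monic := by
    have := Monic.add_of_left hDmonic (by rwa [degree_neg] : (-X : Polynomial ℝ).degree < D.degree)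
    simpa [sub_eq_add_neg] using this
  have hm2 : (D + X).Monic := Monic.add_of_left hDmonic hXlt
  have hd1 : (D - X).natDegree = 2 * k := by
    have : (D - X).degree = D.degree := by
      rw [sub_eq_add_neg]
      exact degree_add_eq_left_of_degree_lt (by rwa [degree_neg])
    have := this.trans hDdeg'
    exact natDegree_eq_of_degree_eq_some this
  have hd2 : (D + X).natDegree = 2 * k := by
    have : (D + X).degree = D.degree := degree_add_eq_left_of_degree_lt hXlt
    exact natDegree_eq_of_degree_eq_some (this.trans hDdeg')
  -- tendsto facts
  have ht1 : Tendsto (fun x : ℝ => (D - X).eval x) atTop atTop := by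
    apply Polynomial.tendsto_atTop_of_leadingCoeff_nonneg
    · rw [Polynomial.degree_eq_natDegree hm1.ne_zero, hd1]
      exact_mod_cast (by omega : 0 < 2 * k)
    · rw [hm1.leadingCoeff]; norm_num
  have ht2 : Tendsto (fun x : ℝ => (D + X).eval x) atBot atTop := by
    set Q : Polynomial ℝ := (D + X).comp (-X) with hQ
    have hQdeg : Q.natDegree = 2 * k := by
      rw [hQ, Polynomial.natDegree_comp, hd2]
      simp
    have hQlc : Q.leadingCoeff = 1 := by
      rw [hQ, Polynomial.leadingCoeff_comp (by simp), hm2.leadingCoeff, hd2]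
      simp [pow_mul]
    have hQt : Tendsto (fun x : ℝ => Q.eval x) atTop atTop := by
      apply Polynomial.tendsto_atTop_of_leadingCoeff_nonneg
      · rw [Polynomial.degree_eq_natDegree (fun h => by simp [h] at hQlc), hQdeg]
        exact_mod_cast (by omega : 0 < 2 * k)
      · rw [hQlc]
        norm_num
    have hev : ∀ x : ℝ, Q.eval x = (D + X).eval (-x) := by
      intro x; rw [hQ, Polynomial.eval_comp]; simp
    have : Tendsto (fun x : ℝ => (D + X).eval (-x)) atTop atTop := by
      simpa [hev] using hQt
    have := this.comp tendsto_neg_atBot_atTop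
    simpa [Function.comp_def, Polynomial.eval_add] using this
  -- bound the function |x| - D(x)
  have hgc : Continuous (fun x : ℝ => |x| - D.eval x) :=
    continuous_abs.sub D.continuous
  have hgt : Tendsto (fun x : ℝ => |x| - D.eval x) (cocompact ℝ) atBot := by
    rw [cocompact_eq_atBot_atTop, Filter.tendsto_sup]
    constructor
    · -- atBot : |x| - D(x) = -x - D(x) = -(D+X)(x) eventually
      have h1 : Tendsto (fun x : ℝ => -((D + X).eval x)) atBot atBot :=
        Filter.tendsto_neg_atBot_iff.mpr ht2
      apply h1.congr'
      filter_upwards [Filter.eventually_le_atBot (0 : ℝ)] with x hx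
      rw [abs_of_nonpos hx]
      simp [Polynomial.eval_add]
      try ring
    · -- atTop : |x| - D(x) = x - D(x) = -(D-X)(x) eventually
      have h1 : Tendsto (fun x : ℝ => -((D - X).eval x)) atTop atBot :=
        Filter.tendsto_neg_atBot_iff.mpr ht1
      apply h1.congr'
      filter_upwards [Filter.eventually_ge_atTop (0 : ℝ)] with x hx
      rw [abs_of_nonneg hx]
      simp [Polynomial.eval_sub]
      try ring
  obtain ⟨x₀, hx₀⟩ := hgc.exists_forall_ge hgt
  set M : ℝ := |x₀| - D.eval x₀ with hM
  set t : ℝ := max (max 2 (⨆ i, |ρ i|)) M + 1 with htdef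
  have htlt : max 2 (⨆ i, |ρ i|) < t := by
    have h1 : max 2 (⨆ i, |ρ i|) ≤ max (max 2 (⨆ i, |ρ i|)) M := le_max_left _ _
    linarith [h1]
  have htM : M < t := by
    have h1 : M ≤ max (max 2 (⨆ i, |ρ i|)) M := le_max_right _ _
    linarith [h1]
  have hbound : ∀ x : ℝ, |x| - D.eval x < t := fun x => lt_of_le_of_lt (hx₀ x) htM
  -- the two SOS polynomials
  set P₁ : Polynomial ℝ := D + (C t - X) with hP₁
  set P₂ : Polynomial ℝ := D + (C t + X) with hP₂
  have hP₁nn : ∀ x, 0 ≤ P₁.eval x := by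
    intro x
    have h1 := hbound x
    have h2 : x ≤ |x| := le_abs_self x
    rw [hP₁]
    simp only [Polynomial.eval_add, Polynomial.eval_sub, Polynomial.eval_C, Polynomial.eval_X]
    linarith
  have hP₂nn : ∀ x, 0 ≤ P₂.eval x := by
    intro x
    have h1 := hbound x
    have h2 : -x ≤ |x| := neg_le_abs x
    rw [hP₂]
    simp only [Polynomial.eval_add, Polynomial.eval_C, Polynomial.eval_X]
    linarith
  obtain ⟨a₁, b₁, hab₁⟩ := nonneg_sum_two_sq P₁ hP₁nn
  obtain ⟨a₂, b₂, hab₂⟩ := nonneg_sum_two_sq P₂ hP₂nn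
  have hlindeg : ∀ c : Polynomial ℝ, c.natDegree ≤ 1 → (D + c).natDegree ≤ 2 * k := by
    intro c hc
    refine le_trans (Polynomial.natDegree_add_le _ _) (max_le (le_of_eq hDdeg) (by omega))
  refine ⟨t, htlt, P₁, P₂, ⟨2, ![a₁, b₁], by simp [Fin.sum_univ_two, hab₁]⟩,
    ⟨2, ![a₂, b₂], by simp [Fin.sum_univ_two, hab₂]⟩, ?_, ?_, ?_, ?_⟩
  · apply hlindeg
    refine le_trans (Polynomial.natDegree_sub_le _ _) (max_le ?_ ?_)
    · simp
    · simp
  · apply hlindeg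
    refine le_trans (Polynomial.natDegree_add_le _ _) (max_le ?_ ?_)
    · simp
    · simp
  · ring
  · ring
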